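/- Removing all agents assigned b∅ (together with their preference lists) and all items not allocated by p (together with their occurrences in preference lists) preserves the set of trading cycles in every layer: for each layer i, a cyclic sequence C is a trading cycle in the original layer P_i with respect to p if and only if C is a trading cycle in the reduced layer P_i' with respect to the restricted assignment p'. -/

import Mathlib

variable {A : Type*} {I : Type*}

/-- A strict preference profile: `acc a b` means item `b` is acceptable to agent `a`;
`pref a b b'` means agent `a` strictly prefers item `b'` over item `b`.
Preferences form a strict linear order on the acceptable items of each agent. -/
structure Profile (A : Type*) (I : Type*) where
  acc : A → I → Prop
  pref : A → I → I → Prop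
  pref_acc : ∀ a b b', pref a b b' → acc a b ∧ acc a b'
  irrefl : ∀ a b, ¬ pref a b b
  trans : ∀ a b c d, pref a b c → pref a c d → pref a b d
  total : ∀ a b b', acc a b → acc a b' → b ≠ b' → pref a b b' ∨ pref a b' b

/-- `p` is an assignment: each item is allocated to at most one agent
(`none` plays the role of `b∅`). -/
def IsAssignment (p : A → Option I) : Prop :=
  ∀ a a' b, p a = some b → p a' = some b → a = a'

/-- An assignment is legal if every allocated item is acceptable to its owner. -/
def Legal (P : Profile A I) (p : A → Option I) : Prop :=
  ∀ a b, p a = some b → P.acc a b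

/-- Strict comparison of `Option I` values from agent `a`'s point of view,
with `none` (i.e. `b∅`) least preferred. -/
def Profile.better (P : Profile A I) (a : A) (x y : Option I) : Prop :=
  match x, y with
  | none, some b => P.acc a b
  | some b, some b' => P.pref a b b'
  | _, none => False

def Profile.betterEq (P : Profile A I) (a : A) (x y : Option I) : Prop :=
  x = y ∨ P.better a x y

/-- `q` pareto dominates `p`. -/
def Dominates (P : Profile A I) (p q : A → Option I) : Prop :=
  (∀ a, P.betterEq a (p a) (q a)) ∧ ∃ a, P.better a (p a) (q a)

/-- `p` is pareto optimal: no legal assignment pareto dominates it. -/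
def ParetoOptimal (P : Profile A I) (p : A → Option I) : Prop :=
  ¬ ∃ q : A → Option I, IsAssignment q ∧ Legal P q ∧ Dominates P p q

/-- Cyclic successor on `Fin t`. -/
def cycSucc {t : ℕ} (r : Fin t) : Fin t := ⟨((r : ℕ) + 1) % t, Nat.mod_lt _ (by have := r.2; omega)⟩

/-- `σ` lists the agents of a trading cycle with respect to assignment `p`:
the agents are distinct, each is allocated an item, and each agent strictly prefers
the item of the (cyclically) next agent over its own. -/
def IsTradingCycle (pref : A → I → I → Prop) (p : A → Option I) {t : ℕ}
    (σ : Fin t → A) : Prop :=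
  Function.Injective σ ∧
    ∀ r : Fin t, ∃ b b', p (σ r) = some b ∧ p (σ (cycSucc r)) = some b' ∧ pref (σ r) b b'

/-- The assignment admits some trading cycle. -/
def AdmitsCycle (pref : A → I → I → Prop) (p : A → Option I) : Prop :=
  ∃ (t : ℕ) (_ : 0 < t) (σ : Fin t → A), IsTradingCycle pref p σ

/-- Agent `a` admits a self loop: some unallocated item is strictly preferred by `a`
over its own allocation. -/
def AdmitsSelfLoop (P : Profile A I) (p : A → Option I) (a : A) : Prop :=
  ∃ b : I, (∀ a', p a' ≠ some b) ∧ P.better a (p a) (some b)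

/-- The set `K` of agents admits a trading cycle (whose agent set is exactly `K`). -/
def SetAdmitsCycle [DecidableEq A] (pref : A → I → I → Prop) (p : A → Option I)
    (K : Finset A) : Prop :=
  ∃ (t : ℕ) (_ : 0 < t) (σ : Fin t → A),
    IsTradingCycle pref p σ ∧ Finset.image σ Finset.univ = K

/-- `(k,α)`-optimality for a multi-layered instance `P : Fin ℓ → Profile A I`. -/
def KAOptimal [DecidableEq A] {ℓ : ℕ} (P : Fin ℓ → Profile A I) (p : A → Option I)
    (k α : ℕ) : Prop :=
  (2 ≤ k → ∀ K : Finset A, K.card = k →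
      ∃ L : Finset (Fin ℓ), L.card = α ∧ ∀ j ∈ L, ¬ SetAdmitsCycle (P j).pref p K) ∧
  (k = 1 → ∀ a : A, ∃ L : Finset (Fin ℓ), L.card = α ∧ ∀ j ∈ L, ¬ AdmitsSelfLoop (P j) p a)

/-- `(k,α)`-upper-bounded optimality. -/
def UBOptimal [DecidableEq A] {ℓ : ℕ} (P : Fin ℓ → Profile A I) (p : A → Option I)
    (k α : ℕ) : Prop :=
  (∀ K : Finset A, K.card ≤ k →
      ∃ L : Finset (Fin ℓ), L.card = α ∧ ∀ j ∈ L, ¬ SetAdmitsCycle (P j).pref p K) ∧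
  (∀ a : A, ∃ L : Finset (Fin ℓ), L.card = α ∧ ∀ j ∈ L, ¬ AdmitsSelfLoop (P j) p a)

/-- `(k,α)`-subset optimality. -/
def SubsetOptimal [DecidableEq A] {ℓ : ℕ} (P : Fin ℓ → Profile A I) (p : A → Option I)
    (k α : ℕ) : Prop :=
  (∀ K : Finset A, K.card = k →
      ∃ L : Finset (Fin ℓ), L.card = α ∧
        ∀ j ∈ L, ∀ K' : Finset A, K ⊆ K' → ¬ SetAdmitsCycle (P j).pref p K') ∧
  (k = 1 → ∀ a : A, ∃ L : Finset (Fin ℓ), L.card = α ∧ ∀ j ∈ L, ¬ AdmitsSelfLoop (P j) p a)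

/-- `(k,α)`-subset* optimality: the subset condition for all nonempty subsets of size
at most `k`, and the self-loop condition for every value of `k`. -/
def SubsetStarOptimal [DecidableEq A] {ℓ : ℕ} (P : Fin ℓ → Profile A I) (p : A → Option I)
    (k α : ℕ) : Prop :=
  (∀ K : Finset A, K.Nonempty → K.card ≤ k →
      ∃ L : Finset (Fin ℓ), L.card = α ∧
        ∀ j ∈ L, ∀ K' : Finset A, K ⊆ K' → ¬ SetAdmitsCycle (P j).pref p K') ∧
  (∀ a : A, ∃ L : Finset (Fin ℓ), L.card = α ∧ ∀ j ∈ L, ¬ AdmitsSelfLoop (P j) p a)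

/-- `ℓ`-global optimality: pareto optimal (no trading cycle, no self loop) in every layer. -/
def GloballyOptimal {ℓ : ℕ} (P : Fin ℓ → Profile A I) (p : A → Option I) : Prop :=
  ∀ j : Fin ℓ, ¬ AdmitsCycle (P j).pref p ∧ ∀ a : A, ¬ AdmitsSelfLoop (P j) p a

/-- The trading graph of `(A, I, P, p)` on vertex set `A ⊕ I`. -/
def TGraph (P : Profile A I) (p : A → Option I) : (A ⊕ I) → (A ⊕ I) → Prop :=
  fun x y =>
    match x, y with
    | Sum.inr b, Sum.inl a => p a = some b ∨ ((∀ a', p a' ≠ some b) ∧ P.acc a b)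
    | Sum.inl a, Sum.inr b => (∃ b₀, p a = some b₀ ∧ P.pref a b₀ b) ∨ (p a = none ∧ P.acc a b)
    | Sum.inl _, Sum.inl _ => False
    | Sum.inr _, Sum.inr _ => False

/-- The restriction of `p` to the reduced instance (agents allocated an item,
items allocated to some agent). -/
def redAssign (p : A → Option I) (a : {a : A // p a ≠ none}) :
    Option {b : I // ∃ a', p a' = some b} :=
  match h : p a.1 with
  | none => none
  | some b => some ⟨b, a.1, h⟩

/-- The identity assignment `p_n (a_i) = b_i` on `n` agents/items. -/
def pn (n : ℕ) : Fin n → Option (Fin n) := fun i => some i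

/-- The profile `P₁(G)`: agent `a_i` prefers exactly the items
`{b_j : (v_i , v_j) ∈ E}` over its own item `b_i`. -/
def P1pref {n : ℕ} (E : Fin n → Fin n → Prop) : Fin n → Fin n → Fin n → Prop :=
  fun i b b' => b = i ∧ E i b'

/-- The profile `P₂(n)`: agent `a_i` prefers only `b_{i+1}` (cyclically) over `b_i`. -/
def P2pref (n : ℕ) : Fin n → Fin n → Fin n → Prop :=
  fun i b b' => b = i ∧ b' = cycSucc i

/-- `colorEnum u w j` is `s_{j+1}`, the `(j+1)`-st smallest color of `[k̃] \ {u,w}`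
(0-indexed `j`). -/
def colorEnum {kt : ℕ} (u w : Fin kt) (j : ℕ) : Fin kt :=
  (((Finset.univ : Finset (Fin kt)) \ {u, w}).sort (· ≤ ·)).getD j u

/-- The layer `P^{MCIS}_{{u,w}}` of the multicolored-independent-set reduction,
recorded via the comparisons with the agents' own items. -/
def MCISpref {n kt : ℕ} (E : Fin n → Fin n → Prop) (c : Fin n → Fin kt)
    (u w : Fin kt) : Fin n → Fin n → Fin n → Prop :=
  fun r b b' => b = r ∧
    ((∃ j : ℕ, j + 1 < kt - 2 ∧ c r = colorEnum u w j ∧ c b' = colorEnum u w (j + 1)) ∨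
      (0 < kt - 2 ∧ c r = colorEnum u w (kt - 3) ∧ c b' = u) ∨
      (c r = u ∧ c b' = w ∧ ¬ E r b') ∨
      (0 < kt - 2 ∧ c r = w ∧ c b' = colorEnum u w 0))

/-- Agents (and, identified with them, items) of the cross-composition for
`Verify-UOA`: `Sum.inl r` is `a_r`; `Sum.inr (j, true)` is `c_j`; `Sum.inr (j, false)`
is `c̄_j`. Each agent owns "its" item. -/
abbrev AgQ (n s : ℕ) := Fin n ⊕ (Fin s × Bool)

/-- The assignment matching each agent with its own item. -/
def pQ (n s : ℕ) : AgQ n s → Option (AgQ n s) := fun a => some a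

/-- The profile `Q_{2i-1}` (extending `P₁(G_i)`), recorded via comparisons
with the agents' own items.  `i.testBit j` is the `j`-th bit of `i`. -/
def Q1pref (n s : ℕ) (E : Fin n → Fin n → Prop) (i : ℕ) :
    AgQ n s → AgQ n s → AgQ n s → Prop :=
  fun a b b' => b = a ∧
    match a, b' with
    | Sum.inl r, Sum.inl r' => (r : ℕ) + 1 < n ∧ E r r'
    | Sum.inl r, Sum.inr (j, bb) => (r : ℕ) = n - 1 ∧ (j : ℕ) = 0 ∧ bb = i.testBit 0
    | Sum.inr (j, bb), Sum.inr (j', bb') =>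
        bb = i.testBit (j : ℕ) ∧ (j' : ℕ) = (j : ℕ) + 1 ∧ bb' = i.testBit (j' : ℕ)
    | Sum.inr (j, bb), Sum.inl r' =>
        bb = i.testBit (j : ℕ) ∧ (j : ℕ) = s - 1 ∧ ∃ rn : Fin n, (rn : ℕ) = n - 1 ∧ E rn r'

/-- The profile `Q_{2i}` (extending `P₂(n)`), recorded via comparisons
with the agents' own items. -/
def Q2pref (n s : ℕ) (i : ℕ) : AgQ n s → AgQ n s → AgQ n s → Prop :=
  fun a b b' => b = a ∧
    match a, b' with
    | Sum.inl r, Sum.inl r' => (r' : ℕ) = (r : ℕ) + 1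
    | Sum.inl r, Sum.inr (j, bb) => (r : ℕ) = n - 1 ∧ (j : ℕ) = 0 ∧ bb = i.testBit 0
    | Sum.inr (j, bb), Sum.inr (j', bb') =>
        bb = i.testBit (j : ℕ) ∧ (j' : ℕ) = (j : ℕ) + 1 ∧ bb' = i.testBit (j' : ℕ)
    | Sum.inr (j, bb), Sum.inl r' =>
        bb = i.testBit (j : ℕ) ∧ (j : ℕ) = s - 1 ∧ (r' : ℕ) = 0

/-- A list of agents forming a trading cycle with respect to `p`. -/
def IsTCList (pref : A → I → I → Prop) (p : A → Option I) (L : List A) : Prop :=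
  L ≠ [] ∧ L.Nodup ∧
    ∀ r : Fin L.length, ∃ b b',
      p (L.get r) = some b ∧ p (L.get (cycSucc r)) = some b' ∧ pref (L.get r) b b'


/-- removing the agents assigned `b∅` and the unallocated items preserves
the set of trading cycles of every layer: every original trading cycle consists of
allocated agents, and a cyclic sequence of allocated agents is a trading cycle in the
original layer iff it is one in the reduced layer with the restricted assignment. -/
theorem statement13 {A I : Type*} {ℓ : ℕ} (p : A → Option I)
    (Pr : Fin ℓ → (A → I → I → Prop)) (i : Fin ℓ) :
    (∀ (t : ℕ) (σ : Fin t → A), IsTradingCycle (Pr i) p σ → ∀ r : Fin t, p (σ r) ≠ none) ∧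
    (∀ (t : ℕ) (σ' : Fin t → {a : A // p a ≠ none}),
      IsTradingCycle (A := {a : A // p a ≠ none}) (I := {b : I // ∃ a', p a' = some b})
          (fun a b b' => Pr i a.1 b.1 b'.1) (redAssign p) σ' ↔
        IsTradingCycle (Pr i) p (fun r => (σ' r).1)) := by
  have hred : ∀ (a : {a : A // p a ≠ none}) (b : {b : I // ∃ a', p a' = some b}),
      redAssign p a = some b ↔ p a.1 = some b.1 := by
    intro a b
    unfold redAssign
    split
    · constructor
      · intro h; exact absurd h (by simp)
      · intro h; exact absurd (by rw [‹p a.1 = none›] at h; exact h) (by simp)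
    · rename_i b0 hb0
      constructor
      · rintro h; cases h; simpa using hb0
      · intro h; rw [hb0] at h
        cases b; simp_all
  constructor
  · rintro t σ ⟨_, hcyc⟩ r hnone
    obtain ⟨b, b', hb, _, _⟩ := hcyc r
    rw [hnone] at hb; exact nomatch hb
  · intro t σ'
    constructor
    · rintro ⟨hinj, hcyc⟩
      refine ⟨fun r s h => hinj (Subtype.ext h), fun r => ?_⟩
      obtain ⟨b, b', hb, hb', hp⟩ := hcyc r
      exact ⟨b.1, b'.1, (hred _ _).1 hb, (hred _ _).1 hb', hp⟩
    · rintro ⟨hinj, hcyc⟩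
      refine ⟨fun r s h => hinj (congrArg Subtype.val h), fun r => ?_⟩
      obtain ⟨b, b', hb, hb', hp⟩ := hcyc r
      exact ⟨⟨b, _, hb⟩, ⟨b', _, hb'⟩, (hred _ _).2 hb, (hred _ _).2 hb', hp⟩
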